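/- Let G be a finite group, M a semi-Mackey functor on G, and S ⊆ M(G/e) a saturated G-invariant submonoid. Put S₀ = (pt_{G/e}^*)⁻¹(S) ⊆ M(G/G). For each transitive finite G-set X define 𝒰_S(X) to be the saturation of pt_X^*(S₀) in M(X). Then 𝒰_S is a semi-Mackey subfunctor of M, and it is the maximum semi-Mackey subfunctor 𝒮 satisfying 𝒮(G/e) ⊆ S. Moreover 𝒰_S(G/e) = S. -/

import Mathlib

/-- A finite `G`-set: a finite type equipped with a `G`-action. -/
structure FinGSet (G : Type) [Group G] where
  carrier : Type
  [fin : Fintype carrier]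
  [act : MulAction G carrier]

attribute [instance] FinGSet.fin FinGSet.act

/-- A map of `G`-sets is equivariant if it commutes with the action. -/
def IsEquivariant {G : Type} [Group G] {X Y : FinGSet G}
    (f : X.carrier → Y.carrier) : Prop :=
  ∀ (g : G) (x : X.carrier), f (g • x) = g • f x

/-- The disjoint union of two finite `G`-sets. -/
def FinGSet.sum {G : Type} [Group G] (X Y : FinGSet G) : FinGSet G where
  carrier := X.carrier ⊕ Y.carrier

/-- A semi-Mackey functor on `G` with underlying family of commutative monoids `N`:
a contravariant functor `res` (restriction) and a covariant functor `tr`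
(transfer) on finite `G`-sets, additive on disjoint unions and satisfying the
Mackey (base change) condition on all pullback diagrams. -/
structure SemiMackey (G : Type) [Group G] (N : FinGSet G → Type)
    [∀ X, CommMonoid (N X)] where
  res : ∀ {X Y : FinGSet G} (f : X.carrier → Y.carrier), IsEquivariant f → (N Y →* N X)
  tr : ∀ {X Y : FinGSet G} (f : X.carrier → Y.carrier), IsEquivariant f → (N X →* N Y)
  res_id : ∀ (X : FinGSet G) (h : IsEquivariant (id : X.carrier → X.carrier)) (m : N X),
    res id h m = m
  tr_id : ∀ (X : FinGSet G) (h : IsEquivariant (id : X.carrier → X.carrier)) (m : N X),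
    tr id h m = m
  res_comp : ∀ {X Y Z : FinGSet G} (f : X.carrier → Y.carrier) (hf : IsEquivariant f)
    (g : Y.carrier → Z.carrier) (hg : IsEquivariant g)
    (hgf : IsEquivariant (g ∘ f)) (m : N Z),
    res (g ∘ f) hgf m = res f hf (res g hg m)
  tr_comp : ∀ {X Y Z : FinGSet G} (f : X.carrier → Y.carrier) (hf : IsEquivariant f)
    (g : Y.carrier → Z.carrier) (hg : IsEquivariant g)
    (hgf : IsEquivariant (g ∘ f)) (m : N X),
    tr (g ∘ f) hgf m = tr g hg (tr f hf m)
  additive : ∀ (X Y : FinGSet G)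
    (h₁ : IsEquivariant (X := X) (Y := FinGSet.sum X Y) Sum.inl)
    (h₂ : IsEquivariant (X := Y) (Y := FinGSet.sum X Y) Sum.inr),
    Function.Bijective (fun m : N (FinGSet.sum X Y) => (res Sum.inl h₁ m, res Sum.inr h₂ m))
  mackey : ∀ {P X W Y : FinGSet G}
    (f : X.carrier → Y.carrier) (hf : IsEquivariant f)
    (g : W.carrier → Y.carrier) (hg : IsEquivariant g)
    (pX : P.carrier → X.carrier) (hpX : IsEquivariant pX)
    (pW : P.carrier → W.carrier) (hpW : IsEquivariant pW)
    (hcomm : ∀ p, f (pX p) = g (pW p)),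
    Function.Bijective
      (fun p : P.carrier =>
        (⟨(pX p, pW p), hcomm p⟩ : {q : X.carrier × W.carrier // f q.1 = g q.2})) →
    ∀ m : N W, res f hf (tr g hg m) = tr pX hpX (res pW hpW m)

/-- The saturation of a subset of a commutative monoid. -/
def satSet {M : Type*} [CommMonoid M] (S : Set M) : Set M :=
  {x | ∃ a : M, ∃ s ∈ S, a * x = s}

/-- The one-point `G`-set `G/G`. -/
def ptObj (G : Type) [Group G] : FinGSet G where
  carrier := PUnit
  act :=
    { smul := fun _ _ => PUnit.unit
      one_smul := fun _ => rfl
      mul_smul := fun _ _ _ => rfl }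

/-- The constant map `pt_X : X → G/G`. -/
def ptMap {G : Type} [Group G] (X : FinGSet G) : X.carrier → (ptObj G).carrier :=
  fun _ => PUnit.unit

theorem ptMap_equivariant {G : Type} [Group G] (X : FinGSet G) :
    IsEquivariant (ptMap X) := fun _ _ => rfl

/-- The free orbit `G/e`, i.e. `G` with the left translation action. -/
abbrev GeObj (G : Type) [Group G] [Fintype G] : FinGSet G where
  carrier := G

theorem rmul_equivariant {G : Type} [Group G] [Fintype G] (g : G) :
    IsEquivariant (X := GeObj G) (Y := GeObj G) (fun x => x * g) :=
  fun a x => by simp [GeObj, smul_eq_mul, mul_assoc]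

section Helpers

variable {G : Type} [Group G]

theorem comp_equivariant {X Y Z : FinGSet G} {f : X.carrier → Y.carrier}
    {g : Y.carrier → Z.carrier} (hf : IsEquivariant f) (hg : IsEquivariant g) :
    IsEquivariant (g ∘ f) := fun a x => by
  show g (f (a • x)) = a • g (f x)
  rw [hf, hg]

theorem inv_equivariant {A B : FinGSet G} {e : A.carrier → B.carrier} (he : IsEquivariant e)
    {e' : B.carrier → A.carrier} (hl : ∀ a, e' (e a) = a) (hr : ∀ b, e (e' b) = b) :
    IsEquivariant e' := by
  intro g b
  have hinj : Function.Injective e := Function.LeftInverse.injective hl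
  apply hinj
  rw [hr, he, hr]

theorem inl_equivariant (A B : FinGSet G) :
    IsEquivariant (X := A) (Y := FinGSet.sum A B) Sum.inl := fun _ _ => rfl

theorem inr_equivariant (A B : FinGSet G) :
    IsEquivariant (X := B) (Y := FinGSet.sum A B) Sum.inr := fun _ _ => rfl

variable {N : FinGSet G → Type} [∀ X, CommMonoid (N X)] (M : SemiMackey G N)

theorem res_congr {X Y : FinGSet G} {f g : X.carrier → Y.carrier} (h : f = g)
    (hf : IsEquivariant f) (hg : IsEquivariant g) (m : N Y) :
    M.res f hf m = M.res g hg m := by subst h; rfl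

theorem tr_congr {X Y : FinGSet G} {f g : X.carrier → Y.carrier} (h : f = g)
    (hf : IsEquivariant f) (hg : IsEquivariant g) (m : N X) :
    M.tr f hf m = M.tr g hg m := by subst h; rfl

/-- The empty `G`-set. -/
def emptyObj (G : Type) [Group G] : FinGSet G where
  carrier := PEmpty
  act :=
    { smul := fun _ x => x
      one_smul := fun _ => rfl
      mul_smul := fun _ _ _ => rfl }

include M in
theorem N_trivial {X : FinGSet G} (h : IsEmpty X.carrier) (a b : N X) : a = b := by
  have h1 : IsEquivariant (X := X) (Y := FinGSet.sum X X) Sum.inl := fun g x => h.elim x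
  have h2 : IsEquivariant (X := X) (Y := FinGSet.sum X X) Sum.inr := fun g x => h.elim x
  obtain ⟨w, hw⟩ := (M.additive X X h1 h2).2 (a, b)
  have heq : (Sum.inl : X.carrier → (FinGSet.sum X X).carrier) = Sum.inr :=
    funext fun x => h.elim x
  have hc := res_congr M heq h1 h2 w
  have ha : M.res Sum.inl h1 w = a := congrArg Prod.fst hw
  have hb : M.res Sum.inr h2 w = b := congrArg Prod.snd hw
  rw [← ha, ← hb, hc]

theorem res_tr_of_iso {A B : FinGSet G} (e : A.carrier → B.carrier) (he : IsEquivariant e)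
    (hinj : Function.Injective e) (m : N A) :
    M.res e he (M.tr e he m) = m := by
  have hid : IsEquivariant (id : A.carrier → A.carrier) := fun _ _ => rfl
  have hbij : Function.Bijective (fun p : A.carrier =>
      (⟨(id p, id p), rfl⟩ : {q : A.carrier × A.carrier // e q.1 = e q.2})) := by
    constructor
    · intro a b hab
      exact congrArg (fun q => q.val.1) hab
    · rintro ⟨⟨x, y⟩, hxy⟩
      refine ⟨x, Subtype.ext ?_⟩
      show (x, x) = (x, y)
      exact congrArg (Prod.mk x) (hinj hxy)
  have hm := M.mackey e he e he id hid id hid (fun _ => rfl) hbij m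
  rw [hm, M.tr_id, M.res_id]

theorem tr_eq_res_inv {A B : FinGSet G} {e : A.carrier → B.carrier} (he : IsEquivariant e)
    {e' : B.carrier → A.carrier} (hl : ∀ a, e' (e a) = a) (hr : ∀ b, e (e' b) = b)
    (he' : IsEquivariant e') (m : N A) :
    M.tr e he m = M.res e' he' m := by
  have hcomp : IsEquivariant (e ∘ e') := comp_equivariant he' he
  have h2 := M.res_comp e' he' e he hcomp (M.tr e he m)
  have h3 : M.res (e ∘ e') hcomp (M.tr e he m) = M.tr e he m :=
    (res_congr M (funext hr : e ∘ e' = id) hcomp (fun _ _ => rfl) _).trans (M.res_id _ _ _)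
  rw [← h3, h2, res_tr_of_iso M e he (Function.LeftInverse.injective hl) m]

theorem tr_res_of_iso {A B : FinGSet G} {e : A.carrier → B.carrier} (he : IsEquivariant e)
    {e' : B.carrier → A.carrier} (hl : ∀ a, e' (e a) = a) (hr : ∀ b, e (e' b) = b)
    (he' : IsEquivariant e') (n : N B) :
    M.tr e he (M.res e he n) = n := by
  rw [tr_eq_res_inv M he hl hr he']
  rw [← M.res_comp e' he' e he (comp_equivariant he' he)]
  exact (res_congr M (funext hr : e ∘ e' = id) _ (fun _ _ => rfl) _).trans (M.res_id _ _ _)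

theorem res_inl_tr_inl (A B : FinGSet G) (h₁ : IsEquivariant (X := A) (Y := FinGSet.sum A B) Sum.inl)
    (a : N A) : M.res Sum.inl h₁ (M.tr (X := A) (Y := FinGSet.sum A B) Sum.inl h₁ a) = a :=
  res_tr_of_iso M (A := A) (B := FinGSet.sum A B) Sum.inl h₁ Sum.inl_injective a

theorem res_inr_tr_inr (A B : FinGSet G) (h₂ : IsEquivariant (X := B) (Y := FinGSet.sum A B) Sum.inr)
    (b : N B) : M.res Sum.inr h₂ (M.tr (X := B) (Y := FinGSet.sum A B) Sum.inr h₂ b) = b :=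
  res_tr_of_iso M (A := B) (B := FinGSet.sum A B) Sum.inr h₂ Sum.inr_injective b

theorem res_inr_tr_inl (A B : FinGSet G)
    (h₁ : IsEquivariant (X := A) (Y := FinGSet.sum A B) Sum.inl)
    (h₂ : IsEquivariant (X := B) (Y := FinGSet.sum A B) Sum.inr)
    (a : N A) : M.res Sum.inr h₂ (M.tr (X := A) (Y := FinGSet.sum A B) Sum.inl h₁ a) = 1 := by
  have hpX : IsEquivariant (X := emptyObj G) (Y := B) (fun x => PEmpty.elim x) := fun g x => x.elim
  have hpW : IsEquivariant (X := emptyObj G) (Y := A) (fun x => PEmpty.elim x) := fun g x => x.elim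
  have hbij : Function.Bijective (fun p : (emptyObj G).carrier =>
      (⟨(PEmpty.elim p, PEmpty.elim p), PEmpty.elim p⟩ :
        {q : B.carrier × A.carrier // Sum.inr q.1 = Sum.inl q.2})) := by
    constructor
    · intro x; exact PEmpty.elim x
    · rintro ⟨⟨x, y⟩, hxy⟩; exact absurd hxy (by simp)
  have hm := M.mackey (P := emptyObj G) (X := B) (W := A) (Y := FinGSet.sum A B) Sum.inr h₂ Sum.inl h₁ (fun x => PEmpty.elim x) hpX (fun x => PEmpty.elim x) hpW
    (fun p => PEmpty.elim p) hbij a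
  rw [hm, N_trivial M ⟨fun x => PEmpty.elim x⟩ (M.res (X := emptyObj G) (Y := A) (fun x => PEmpty.elim x) hpW a) 1, map_one]

theorem res_inl_tr_inr (A B : FinGSet G)
    (h₁ : IsEquivariant (X := A) (Y := FinGSet.sum A B) Sum.inl)
    (h₂ : IsEquivariant (X := B) (Y := FinGSet.sum A B) Sum.inr)
    (b : N B) : M.res Sum.inl h₁ (M.tr (X := B) (Y := FinGSet.sum A B) Sum.inr h₂ b) = 1 := by
  have hpX : IsEquivariant (X := emptyObj G) (Y := A) (fun x => PEmpty.elim x) := fun g x => x.elim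
  have hpW : IsEquivariant (X := emptyObj G) (Y := B) (fun x => PEmpty.elim x) := fun g x => x.elim
  have hbij : Function.Bijective (fun p : (emptyObj G).carrier =>
      (⟨(PEmpty.elim p, PEmpty.elim p), PEmpty.elim p⟩ :
        {q : A.carrier × B.carrier // Sum.inl q.1 = Sum.inr q.2})) := by
    constructor
    · intro x; exact PEmpty.elim x
    · rintro ⟨⟨x, y⟩, hxy⟩; exact absurd hxy (by simp)
  have hm := M.mackey (P := emptyObj G) (X := A) (W := B) (Y := FinGSet.sum A B) Sum.inl h₁ Sum.inr h₂ (fun x => PEmpty.elim x) hpX (fun x => PEmpty.elim x) hpW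
    (fun p => PEmpty.elim p) hbij b
  rw [hm, N_trivial M ⟨fun x => PEmpty.elim x⟩ (M.res (X := emptyObj G) (Y := B) (fun x => PEmpty.elim x) hpW b) 1, map_one]

theorem decompose (A B : FinGSet G)
    (h₁ : IsEquivariant (X := A) (Y := FinGSet.sum A B) Sum.inl)
    (h₂ : IsEquivariant (X := B) (Y := FinGSet.sum A B) Sum.inr)
    (w : N (FinGSet.sum A B)) :
    w = M.tr Sum.inl h₁ (M.res Sum.inl h₁ w) * M.tr Sum.inr h₂ (M.res Sum.inr h₂ w) := by
  apply (M.additive A B h₁ h₂).1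
  refine Prod.ext ?_ ?_
  · show M.res Sum.inl h₁ w = M.res (X := A) (Y := FinGSet.sum A B) Sum.inl h₁ _
    rw [map_mul, res_inl_tr_inl, res_inl_tr_inr, mul_one]
  · show M.res Sum.inr h₂ w = M.res (X := B) (Y := FinGSet.sum A B) Sum.inr h₂ _
    rw [map_mul, res_inr_tr_inl, res_inr_tr_inr, one_mul]

/-- The sub-`G`-set given by an invariant predicate. -/
noncomputable def subObj (X : FinGSet G) (p : X.carrier → Prop) (hp : ∀ (g : G) (x), p x → p (g • x)) :
    FinGSet G where
  carrier := {x : X.carrier // p x}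
  fin := @Subtype.fintype _ _ (Classical.decPred p) _
  act :=
    { smul := fun g x => ⟨g • x.val, hp g x.val x.prop⟩
      one_smul := fun x => Subtype.ext (one_smul G x.val)
      mul_smul := fun g h x => Subtype.ext (mul_smul g h x.val) }

theorem subVal_equivariant (X : FinGSet G) (p : X.carrier → Prop)
    (hp : ∀ (g : G) (x), p x → p (g • x)) :
    IsEquivariant (X := subObj X p hp) (Y := X) Subtype.val := fun _ _ => rfl

include M in
theorem split {X Z : FinGSet G} (u : X.carrier → Z.carrier) (hu : IsEquivariant u)
    (p : X.carrier → Prop) (hp : ∀ (g : G) (x), p x → p (g • x))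
    (hp' : ∀ (g : G) (x), ¬ p x → ¬ p (g • x)) (n : N X) :
    M.tr u hu n
      = M.tr (u ∘ Subtype.val) (comp_equivariant (subVal_equivariant X p hp) hu)
          (M.res (X := subObj X p hp) (Y := X) Subtype.val (subVal_equivariant X p hp) n)
        * M.tr (u ∘ Subtype.val)
            (comp_equivariant (subVal_equivariant X (fun x => ¬ p x) hp') hu)
          (M.res (X := subObj X (fun x => ¬ p x) hp') (Y := X) Subtype.val (subVal_equivariant X (fun x => ¬ p x) hp') n) := by
  classical
  set A := subObj X p hp with hA
  set B := subObj X (fun x => ¬ p x) hp' with hB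
  have h₁ : IsEquivariant (X := A) (Y := FinGSet.sum A B) Sum.inl := inl_equivariant A B
  have h₂ : IsEquivariant (X := B) (Y := FinGSet.sum A B) Sum.inr := inr_equivariant A B
  set Φ : (FinGSet.sum A B).carrier → X.carrier := Sum.elim Subtype.val Subtype.val with hΦdef
  have hΦ : IsEquivariant Φ := by rintro g (x | x) <;> rfl
  set Φ' : X.carrier → (FinGSet.sum A B).carrier :=
    fun x => if h : p x then Sum.inl ⟨x, h⟩ else Sum.inr ⟨x, h⟩ with hΦ'def
  have hl : ∀ y, Φ' (Φ y) = y := by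
    rintro (⟨x, hx⟩ | ⟨x, hx⟩) <;> (show Φ' x = _; simp [hΦ'def, hx]) <;> rfl
  have hr : ∀ x, Φ (Φ' x) = x := by
    intro x
    by_cases h : p x <;> simp [hΦdef, hΦ'def, h] <;> rfl
  have hΦ' : IsEquivariant Φ' := inv_equivariant hΦ hl hr
  have key : n = M.tr Φ hΦ (M.res Φ hΦ n) := (tr_res_of_iso M hΦ hl hr hΦ' n).symm
  have hcomp : IsEquivariant (u ∘ Φ) := comp_equivariant hΦ hu
  calc M.tr u hu n = M.tr u hu (M.tr Φ hΦ (M.res Φ hΦ n)) := by rw [← key]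
    _ = M.tr (u ∘ Φ) hcomp (M.res Φ hΦ n) := (M.tr_comp Φ hΦ u hu hcomp _).symm
    _ = _ := ?_
  rw [decompose M A B h₁ h₂ (M.res Φ hΦ n), map_mul]
  congr 1
  · rw [← M.tr_comp Sum.inl h₁ (u ∘ Φ) hcomp (comp_equivariant h₁ hcomp),
        ← M.res_comp Sum.inl h₁ Φ hΦ (comp_equivariant h₁ hΦ)]
    rfl
  · rw [← M.tr_comp Sum.inr h₂ (u ∘ Φ) hcomp (comp_equivariant h₂ hcomp),
        ← M.res_comp Sum.inr h₂ Φ hΦ (comp_equivariant h₂ hΦ)]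
    rfl
/-- The product of two finite `G`-sets with the diagonal action. -/
def prodObj (A B : FinGSet G) : FinGSet G where
  carrier := A.carrier × B.carrier

theorem fst_equivariant (A B : FinGSet G) :
    IsEquivariant (X := prodObj A B) (Y := A) Prod.fst := fun _ _ => rfl

theorem snd_equivariant (A B : FinGSet G) :
    IsEquivariant (X := prodObj A B) (Y := B) Prod.snd := fun _ _ => rfl

include M in
theorem pt_mackey (W X : FinGSet G) (m : N X) :
    M.res (ptMap W) (ptMap_equivariant W) (M.tr (ptMap X) (ptMap_equivariant X) m)
      = M.tr (Prod.fst : (prodObj W X).carrier → W.carrier) (fst_equivariant W X)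
          (M.res (X := prodObj W X) (Y := X) (Prod.snd : (prodObj W X).carrier → X.carrier) (snd_equivariant W X) m) := by
  have hbij : Function.Bijective (fun p : (prodObj W X).carrier =>
      (⟨(p.1, p.2), rfl⟩ : {q : W.carrier × X.carrier // ptMap W q.1 = ptMap X q.2})) := by
    constructor
    · intro a b hab
      exact congrArg Subtype.val hab
    · intro q
      exact ⟨q.val, Subtype.ext rfl⟩
  exact M.mackey (P := prodObj W X) (X := W) (W := X) (Y := ptObj G) (ptMap W) (ptMap_equivariant W) (ptMap X) (ptMap_equivariant X)
    Prod.fst (fst_equivariant W X) Prod.snd (snd_equivariant W X) (fun _ => rfl) hbij m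

end Helpers

theorem tr_res_free {G : Type} [Group G] [Fintype G] {N : FinGSet G → Type}
    [∀ X, CommMonoid (N X)] (M : SemiMackey G N) (S : Submonoid (N (GeObj G)))
    (hinv : ∀ g : G, ∀ s ∈ S, M.res (fun x => x * g) (rmul_equivariant g) s ∈ S) :
    ∀ (n : ℕ) (X : FinGSet G), Fintype.card X.carrier ≤ n →
      ∀ (u : X.carrier → (GeObj G).carrier) (hu : IsEquivariant u)
        (v : X.carrier → (GeObj G).carrier) (hv : IsEquivariant v),
        ∀ s ∈ S, M.tr u hu (M.res v hv s) ∈ S := by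
  intro n
  induction n with
  | zero =>
    intro X hcard u hu v hv s hs
    have hE : IsEmpty X.carrier := Fintype.card_eq_zero_iff.mp (Nat.le_zero.mp hcard)
    rw [N_trivial M hE (M.res v hv s) 1, map_one]
    exact S.one_mem
  | succ n ih =>
    intro X hcard u hu v hv s hs
    rcases isEmpty_or_nonempty X.carrier with hE | ⟨⟨x₀⟩⟩
    · rw [N_trivial M hE (M.res v hv s) 1, map_one]
      exact S.one_mem
    · classical
      set c₀ : X.carrier := (u x₀)⁻¹ • x₀ with hc₀
      set p : X.carrier → Prop := fun x => (u x)⁻¹ • x = c₀ with hpdef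
      have hporb : ∀ (g : G) (x : X.carrier), (u (g • x))⁻¹ • (g • x) = (u x)⁻¹ • x := by
        intro g x
        rw [hu g x]
        show ((g • u x : G)⁻¹ : G) • (g • x) = _
        rw [smul_eq_mul, mul_inv_rev, mul_smul, inv_smul_smul]
      have hpiff : ∀ (g : G) (x : X.carrier), p (g • x) ↔ p x := by
        intro g x
        show (u (g • x))⁻¹ • (g • x) = c₀ ↔ (u x)⁻¹ • x = c₀
        rw [hporb g x]
      have hp : ∀ (g : G) (x), p x → p (g • x) := fun g x hx => (hpiff g x).mpr hx
      have hp' : ∀ (g : G) (x), ¬ p x → ¬ p (g • x) := fun g x hx hgx => hx ((hpiff g x).mp hgx)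
      have hu1 : u c₀ = 1 := by
        rw [hc₀, hu, smul_eq_mul, inv_mul_cancel]
      have hpc₀ : p c₀ := by
        show (u c₀)⁻¹ • c₀ = c₀
        rw [hu1]
        simp
      rw [split M u hu p hp hp' (M.res v hv s)]
      set A := subObj X p hp with hA
      set B := subObj X (fun x => ¬ p x) hp' with hB
      have hvalA := subVal_equivariant X p hp
      have hvalB := subVal_equivariant X (fun x => ¬ p x) hp'
      apply S.mul_mem
      · -- the distinguished free orbit
        set e : A.carrier → (GeObj G).carrier := u ∘ Subtype.val with he_def
        have he : IsEquivariant e := comp_equivariant hvalA hu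
        have hmem : ∀ g : G, p (g • c₀) := fun g => hp g c₀ hpc₀
        set e' : (GeObj G).carrier → A.carrier := fun g => ⟨g • c₀, hmem g⟩ with he'_def
        have hl : ∀ a, e' (e a) = a := by
          rintro ⟨x, hx⟩
          apply Subtype.ext
          show u x • c₀ = x
          rw [← hx, smul_inv_smul]
        have hr : ∀ b, e (e' b) = b := by
          intro g
          show u (g • c₀) = g
          rw [hu, hu1, smul_eq_mul, mul_one]
        have he' : IsEquivariant e' := inv_equivariant he hl hr
        rw [tr_eq_res_inv M he hl hr he']
        rw [← M.res_comp (X := A) (Y := X) (Z := GeObj G) Subtype.val hvalA v hv (comp_equivariant hvalA hv)]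
        rw [← M.res_comp e' he' (v ∘ Subtype.val) (comp_equivariant hvalA hv)
          (comp_equivariant he' (comp_equivariant hvalA hv))]
        set w : (GeObj G).carrier → (GeObj G).carrier := (v ∘ Subtype.val) ∘ e' with hw_def
        have hw : IsEquivariant w := comp_equivariant he' (comp_equivariant hvalA hv)
        have hweq : w = fun x => x * w 1 := by
          funext g
          have h1 : (g : G) • (1 : G) = g := by rw [smul_eq_mul, mul_one]
          calc w g = w (g • (1 : G)) := by rw [h1]
            _ = g • w 1 := hw g 1
            _ = g * w 1 := rfl
        have key := hinv (w 1) s hs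
        rw [← res_congr M hweq hw (rmul_equivariant (w 1)) s] at key
        exact key
      · -- induction on the rest
        have hx₀A : p x₀ := rfl
        have hlt : Fintype.card B.carrier < Fintype.card X.carrier := by
          have h1 : Fintype.card {x : X.carrier // ¬ p x} < Fintype.card X.carrier := by
            apply Fintype.card_lt_of_injective_of_notMem
              (Subtype.val : {x : X.carrier // ¬ p x} → X.carrier)
              Subtype.val_injective (b := x₀)
            rintro ⟨b, hb⟩
            exact b.prop (hb ▸ hx₀A)
          convert h1 using 2 <;> rfl
        have hcardB : Fintype.card B.carrier ≤ n := by omega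
        rw [← M.res_comp (X := B) (Y := X) (Z := GeObj G) Subtype.val hvalB v hv (comp_equivariant hvalB hv)]
        exact ih B hcardB (u ∘ Subtype.val) (comp_equivariant hvalB hu)
          (v ∘ Subtype.val) (comp_equivariant hvalB hv) s hs


theorem res_pt_tr_pt {G : Type} [Group G] {N : FinGSet G → Type}
    [∀ X, CommMonoid (N X)] (M : SemiMackey G N) (Y : FinGSet G) (t : N Y) :
    ∃ c, M.res (ptMap Y) (ptMap_equivariant Y) (M.tr (ptMap Y) (ptMap_equivariant Y) t)
      = t * c := by
  classical
  rw [pt_mackey M Y Y t]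
  set P := prodObj Y Y with hP
  set p : P.carrier → Prop := fun q => q.1 = q.2 with hpdef
  have hp : ∀ (g : G) (q : P.carrier), p q → p (g • q) := by
    intro g q hq
    show g • q.1 = g • q.2
    rw [show q.1 = q.2 from hq]
  have hp' : ∀ (g : G) (q : P.carrier), ¬ p q → ¬ p (g • q) := by
    intro g q hq hgq
    exact hq (smul_left_cancel g hgq)
  rw [split M Prod.fst (fst_equivariant Y Y) p hp hp' (M.res Prod.snd (snd_equivariant Y Y) t)]
  set A := subObj P p hp with hA
  have hvalA := subVal_equivariant P p hp
  set e : A.carrier → Y.carrier := Prod.fst ∘ Subtype.val with he_def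
  have he : IsEquivariant e := comp_equivariant hvalA (fst_equivariant Y Y)
  set e' : Y.carrier → A.carrier := fun y => ⟨(y, y), rfl⟩ with he'_def
  have hl : ∀ a, e' (e a) = a := by
    rintro ⟨⟨y1, y2⟩, hy⟩
    apply Subtype.ext
    show (y1, y1) = (y1, y2)
    exact congrArg (Prod.mk y1) hy
  have hr : ∀ y, e (e' y) = y := fun y => rfl
  have he' : IsEquivariant e' := inv_equivariant he hl hr
  have h1 : M.res Subtype.val hvalA (M.res Prod.snd (snd_equivariant Y Y) t)
      = M.res e he t := by
    rw [← M.res_comp (X := A) (Y := P) (Z := Y) Subtype.val hvalA Prod.snd (snd_equivariant Y Y)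
      (comp_equivariant hvalA (snd_equivariant Y Y))]
    apply res_congr
    funext a
    exact a.prop.symm
  have h2 : M.tr (Prod.fst ∘ Subtype.val)
        (comp_equivariant hvalA (fst_equivariant Y Y))
        (M.res (X := A) (Y := P) Subtype.val hvalA (M.res Prod.snd (snd_equivariant Y Y) t)) = t := by
    rw [h1]
    exact tr_res_of_iso M he hl hr he' t
  exact ⟨_, congrArg (· * _) h2⟩

/-- For a saturated `G`-invariant submonoid `S ⊆ M(G/e)`, with
`S₀ = (pt_{G/e}^*)⁻¹(S)`, the family `𝒰_S(X) = (pt_X^*(S₀))~` is a semi-Mackey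
subfunctor of `M`; it is the maximum semi-Mackey subfunctor `𝒮` with
`𝒮(G/e) ⊆ S`, and moreover `𝒰_S(G/e) = S`. -/
theorem maxSub_spec {G : Type} [Group G] [Fintype G] {N : FinGSet G → Type}
    [∀ X, CommMonoid (N X)] (M : SemiMackey G N)
    (S : Submonoid (N (GeObj G)))
    (hsat : satSet (S : Set (N (GeObj G))) = (S : Set (N (GeObj G))))
    (hinv : ∀ g : G, ∀ s ∈ S, M.res (fun x => x * g) (rmul_equivariant g) s ∈ S) :
    ∃ U : ∀ X : FinGSet G, Submonoid (N X),
      (∀ X : FinGSet G,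
        (U X : Set (N X))
          = satSet ((M.res (ptMap X) (ptMap_equivariant X)) ''
              ((M.res (ptMap (GeObj G)) (ptMap_equivariant (GeObj G))) ⁻¹'
                (S : Set (N (GeObj G)))))) ∧
      (∀ {X Y : FinGSet G} (f : X.carrier → Y.carrier) (hf : IsEquivariant f),
        (∀ s ∈ U Y, M.res f hf s ∈ U X) ∧ (∀ s ∈ U X, M.tr f hf s ∈ U Y)) ∧
      U (GeObj G) = S ∧
      (∀ T : ∀ X : FinGSet G, Submonoid (N X),
        (∀ {X Y : FinGSet G} (f : X.carrier → Y.carrier) (hf : IsEquivariant f),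
          ∀ s ∈ T Y, M.res f hf s ∈ T X) →
        (∀ {X Y : FinGSet G} (f : X.carrier → Y.carrier) (hf : IsEquivariant f),
          ∀ s ∈ T X, M.tr f hf s ∈ T Y) →
        T (GeObj G) ≤ S → ∀ X : FinGSet G, T X ≤ U X) := by
  classical
  -- the underlying set of `U X`
  have hone : ∀ X : FinGSet G, (1 : N X) ∈ satSet ((M.res (ptMap X) (ptMap_equivariant X)) ''
      ((M.res (ptMap (GeObj G)) (ptMap_equivariant (GeObj G))) ⁻¹'
        (S : Set (N (GeObj G))))) := by
    intro X
    refine ⟨1, M.res (ptMap X) (ptMap_equivariant X) 1, ⟨1, ?_, rfl⟩, by rw [one_mul, map_one]⟩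
    show M.res (ptMap (GeObj G)) (ptMap_equivariant (GeObj G)) 1 ∈ (S : Set (N (GeObj G)))
    rw [map_one]
    exact S.one_mem
  have hmul : ∀ (X : FinGSet G) (x y : N X),
      x ∈ satSet ((M.res (ptMap X) (ptMap_equivariant X)) ''
        ((M.res (ptMap (GeObj G)) (ptMap_equivariant (GeObj G))) ⁻¹'
          (S : Set (N (GeObj G))))) →
      y ∈ satSet ((M.res (ptMap X) (ptMap_equivariant X)) ''
        ((M.res (ptMap (GeObj G)) (ptMap_equivariant (GeObj G))) ⁻¹'
          (S : Set (N (GeObj G))))) →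
      x * y ∈ satSet ((M.res (ptMap X) (ptMap_equivariant X)) ''
        ((M.res (ptMap (GeObj G)) (ptMap_equivariant (GeObj G))) ⁻¹'
          (S : Set (N (GeObj G))))) := by
    rintro X x y ⟨a, _, ⟨m, hm, rfl⟩, ha⟩ ⟨b, _, ⟨m', hm', rfl⟩, hb⟩
    refine ⟨a * b, M.res (ptMap X) (ptMap_equivariant X) (m * m'), ⟨m * m', ?_, rfl⟩, ?_⟩
    · show M.res (ptMap (GeObj G)) (ptMap_equivariant (GeObj G)) (m * m')
        ∈ (S : Set (N (GeObj G)))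
      rw [map_mul]
      exact S.mul_mem hm hm'
    · rw [map_mul, ← ha, ← hb, mul_mul_mul_comm]
  set U : ∀ X : FinGSet G, Submonoid (N X) := fun X =>
    { carrier := satSet ((M.res (ptMap X) (ptMap_equivariant X)) ''
        ((M.res (ptMap (GeObj G)) (ptMap_equivariant (GeObj G))) ⁻¹'
          (S : Set (N (GeObj G)))))
      one_mem' := hone X
      mul_mem' := fun ha hb => hmul X _ _ ha hb } with hU
  -- restrictions of pulled-back elements
  have hptc : ∀ {X Y : FinGSet G} (f : X.carrier → Y.carrier) (hf : IsEquivariant f)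
      (m : N (ptObj G)), M.res f hf (M.res (ptMap Y) (ptMap_equivariant Y) m)
        = M.res (ptMap X) (ptMap_equivariant X) m := by
    intro X Y f hf m
    rw [← M.res_comp f hf (ptMap Y) (ptMap_equivariant Y)
      (comp_equivariant hf (ptMap_equivariant Y))]
    exact res_congr M rfl _ _ m
  refine ⟨U, fun X => rfl, ?_, ?_, ?_⟩
  · -- closure under restrictions and transfers
    intro X Y f hf
    constructor
    · rintro s ⟨a, _, ⟨m, hm, rfl⟩, ha⟩
      exact ⟨M.res f hf a, M.res (ptMap X) (ptMap_equivariant X) m, ⟨m, hm, rfl⟩,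
        by rw [← map_mul, ha, hptc f hf m]⟩
    · rintro s ⟨a, _, ⟨m, hm, rfl⟩, ha⟩
      obtain ⟨c, hc⟩ := res_pt_tr_pt M Y
        (M.tr f hf (M.res (ptMap X) (ptMap_equivariant X) m))
      refine ⟨c * M.tr f hf a,
        M.res (ptMap Y) (ptMap_equivariant Y)
          (M.tr (ptMap Y) (ptMap_equivariant Y)
            (M.tr f hf (M.res (ptMap X) (ptMap_equivariant X) m))),
        ⟨M.tr (ptMap Y) (ptMap_equivariant Y)
          (M.tr f hf (M.res (ptMap X) (ptMap_equivariant X) m)), ?_, rfl⟩, ?_⟩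
      · -- the transferred element lies in `S₀`
        show M.res (ptMap (GeObj G)) (ptMap_equivariant (GeObj G)) _ ∈ (S : Set (N (GeObj G)))
        have e1 : M.tr (ptMap Y) (ptMap_equivariant Y)
            (M.tr f hf (M.res (ptMap X) (ptMap_equivariant X) m))
            = M.tr (ptMap X) (ptMap_equivariant X)
                (M.res (ptMap X) (ptMap_equivariant X) m) := by
          rw [← M.tr_comp f hf (ptMap Y) (ptMap_equivariant Y)
            (comp_equivariant hf (ptMap_equivariant Y))]
          exact tr_congr M rfl _ _ _
        rw [e1, pt_mackey M (GeObj G) X (M.res (ptMap X) (ptMap_equivariant X) m)]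
        have e2 : M.res (Prod.snd : (prodObj (GeObj G) X).carrier → X.carrier)
              (snd_equivariant (GeObj G) X) (M.res (ptMap X) (ptMap_equivariant X) m)
            = M.res (X := prodObj (GeObj G) X) (Y := GeObj G) (Prod.fst : (prodObj (GeObj G) X).carrier → (GeObj G).carrier)
              (fst_equivariant (GeObj G) X)
              (M.res (ptMap (GeObj G)) (ptMap_equivariant (GeObj G)) m) := by
          rw [← M.res_comp (X := prodObj (GeObj G) X) (Y := X) (Z := ptObj G) Prod.snd (snd_equivariant (GeObj G) X) (ptMap X)
            (ptMap_equivariant X)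
            (comp_equivariant (snd_equivariant (GeObj G) X) (ptMap_equivariant X)),
            ← M.res_comp (X := prodObj (GeObj G) X) (Y := GeObj G) (Z := ptObj G) Prod.fst (fst_equivariant (GeObj G) X) (ptMap (GeObj G))
            (ptMap_equivariant (GeObj G))
            (comp_equivariant (fst_equivariant (GeObj G) X) (ptMap_equivariant (GeObj G)))]
          exact res_congr M rfl _ _ m
        rw [e2]
        exact tr_res_free M S hinv (Fintype.card (prodObj (GeObj G) X).carrier)
          (prodObj (GeObj G) X) le_rfl Prod.fst (fst_equivariant (GeObj G) X)
          Prod.fst (fst_equivariant (GeObj G) X)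
          (M.res (ptMap (GeObj G)) (ptMap_equivariant (GeObj G)) m) hm
      · calc (c * M.tr f hf a) * M.tr f hf s
            = c * (M.tr f hf a * M.tr f hf s) := mul_assoc _ _ _
          _ = c * M.tr f hf (a * s) := by rw [map_mul]
          _ = c * M.tr f hf (M.res (ptMap X) (ptMap_equivariant X) m) := by rw [ha]
          _ = M.tr f hf (M.res (ptMap X) (ptMap_equivariant X) m) * c := mul_comm _ _
          _ = _ := hc.symm
  · -- `U (GeObj G) = S`
    apply le_antisymm
    · rintro x ⟨a, _, ⟨m, hm, rfl⟩, ha⟩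
      have hx : x ∈ satSet (S : Set (N (GeObj G))) :=
        ⟨a, M.res (ptMap (GeObj G)) (ptMap_equivariant (GeObj G)) m, hm, ha⟩
      rw [hsat] at hx
      exact hx
    · intro s hs
      have hmS : M.res (ptMap (GeObj G)) (ptMap_equivariant (GeObj G))
          (M.tr (ptMap (GeObj G)) (ptMap_equivariant (GeObj G)) s) ∈ S := by
        rw [pt_mackey M (GeObj G) (GeObj G) s]
        exact tr_res_free M S hinv (Fintype.card (prodObj (GeObj G) (GeObj G)).carrier)
          (prodObj (GeObj G) (GeObj G)) le_rfl Prod.fst (fst_equivariant _ _)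
          Prod.snd (snd_equivariant _ _) s hs
      obtain ⟨c, hc⟩ := res_pt_tr_pt M (GeObj G) s
      exact ⟨c, _, ⟨M.tr (ptMap (GeObj G)) (ptMap_equivariant (GeObj G)) s, hmS, rfl⟩,
        by rw [mul_comm]; exact hc.symm⟩
  · -- maximality
    intro T hTres hTtr hTle X t ht
    have hm : M.tr (ptMap X) (ptMap_equivariant X) t ∈ T (ptObj G) :=
      hTtr (ptMap X) (ptMap_equivariant X) t ht
    have hm2 : M.res (ptMap (GeObj G)) (ptMap_equivariant (GeObj G))
        (M.tr (ptMap X) (ptMap_equivariant X) t) ∈ T (GeObj G) :=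
      hTres (ptMap (GeObj G)) (ptMap_equivariant (GeObj G)) _ hm
    obtain ⟨c, hc⟩ := res_pt_tr_pt M X t
    exact ⟨c, _, ⟨M.tr (ptMap X) (ptMap_equivariant X) t, hTle hm2, rfl⟩,
      by rw [mul_comm]; exact hc.symm⟩
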